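/- arXiv:1006.2022 — 2 statements merged into one kernel-verified Lean document; each statement's English description precedes it below -/
import Mathlib

section
/- Let the pairs (S_{1,i},S_{2,i}), i = 1,…,n, be i.i.d. finite-valued, let M1 be a finite-valued random variable independent of (S1^n,S2^n), and let M12 = f12(M1,S1^n) for a deterministic function f12. Then I(M12;S1^n|S2^n) = Σ_{i=1}^n I(S_{1,i};U_i|S_{2,i}), where U_i = (M12, S1^{i−1}, S2_{i+1}^n). -/
open scoped BigOperators Classical
open Finset

namespace Paper

variable {Ω : Type} [Fintype Ω]

/-- `pr μ X a` is the probability that the random variable `X` takes the value `a`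
under the pmf `μ` on the finite sample space `Ω`. -/
noncomputable def pr {A : Type} (μ : Ω → ℝ) (X : Ω → A) (a : A) : ℝ :=
  ∑ ω, if X ω = a then μ ω else 0

/-- `μ` is a probability mass function on the finite space `Ω`. -/
def IsPMF (μ : Ω → ℝ) : Prop := (∀ ω, 0 ≤ μ ω) ∧ ∑ ω, μ ω = 1

/-- Shannon entropy (in bits) of the random variable `X` under `μ`. -/
noncomputable def ent {A : Type} [Fintype A] (μ : Ω → ℝ) (X : Ω → A) : ℝ :=
  -∑ a, pr μ X a * Real.logb 2 (pr μ X a)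

/-- Mutual information `I(X;Y)` (in bits) under `μ`. -/
noncomputable def mi {A B : Type} [Fintype A] [Fintype B] (μ : Ω → ℝ)
    (X : Ω → A) (Y : Ω → B) : ℝ :=
  ent μ X + ent μ Y - ent μ (fun ω => (X ω, Y ω))

/-- Conditional mutual information `I(X;Y|Z)` (in bits) under `μ`. -/
noncomputable def cmi {A B C : Type} [Fintype A] [Fintype B] [Fintype C] (μ : Ω → ℝ)
    (X : Ω → A) (Y : Ω → B) (Z : Ω → C) : ℝ :=
  ent μ (fun ω => (X ω, Z ω)) + ent μ (fun ω => (Y ω, Z ω))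
    - ent μ (fun ω => (X ω, Y ω, Z ω)) - ent μ Z

/-- `X` and `Y` are conditionally independent given `Z` under `μ`:
`P(X = a, Y = b | Z = c) = P(X = a | Z = c) · P(Y = b | Z = c)`
whenever `P(Z = c) ≠ 0`. -/
def CondIndep {A B C : Type} (μ : Ω → ℝ) (X : Ω → A) (Y : Ω → B) (Z : Ω → C) : Prop :=
  ∀ a b c, pr μ Z c ≠ 0 →
    pr μ (fun ω => (X ω, Y ω, Z ω)) (a, b, c) * pr μ Z c
      = pr μ (fun ω => (X ω, Z ω)) (a, c) * pr μ (fun ω => (Y ω, Z ω)) (b, c)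


/-! ### Layer 1: general lemmas about `pr` and `ent` -/

lemma pr_nonneg {A : Type} {μ : Ω → ℝ} (hμ : ∀ ω, 0 ≤ μ ω) (X : Ω → A) (a : A) :
    0 ≤ pr μ X a := by
  apply Finset.sum_nonneg; intro ω _; split <;> simp [hμ ω]

lemma pr_comp {A B : Type} [Fintype A] (μ : Ω → ℝ) (X : Ω → A) (g : A → B) (b : B) :
    pr μ (fun ω => g (X ω)) b = ∑ a, if g a = b then pr μ X a else 0 := by
  unfold pr
  have h : ∀ a, (if g a = b then (∑ ω, if X ω = a then μ ω else 0) else 0)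
      = ∑ ω, if X ω = a then (if g a = b then μ ω else 0) else 0 := by
    intro a; split <;> simp
  simp only [h]
  rw [Finset.sum_comm]
  refine Finset.sum_congr rfl fun ω _ => ?_
  rw [Finset.sum_eq_single (X ω)]
  · simp
  · intro a _ ha; simp [Ne.symm ha]
  · simp

lemma pr_comp_bij {A B : Type} (μ : Ω → ℝ) (X : Ω → A) (g : A → B) (h : B → A)
    (hgh : ∀ b, g (h b) = b) (hhg : ∀ a, h (g a) = a) (b : B) :
    pr μ (fun ω => g (X ω)) b = pr μ X (h b) := by
  unfold pr
  refine Finset.sum_congr rfl fun ω _ => ?_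
  congr 1
  simp only [eq_iff_iff]
  constructor
  · intro hh; rw [← hh, hhg]
  · intro hh; rw [hh, hgh]

lemma ent_comp_bij {A B : Type} [Fintype A] [Fintype B] (μ : Ω → ℝ) (X : Ω → A)
    (g : A → B) (h : B → A) (hgh : ∀ b, g (h b) = b) (hhg : ∀ a, h (g a) = a) :
    ent μ (fun ω => g (X ω)) = ent μ X := by
  unfold ent
  congr 1
  have step : ∀ b : B, pr μ (fun ω => g (X ω)) b * Real.logb 2 (pr μ (fun ω => g (X ω)) b)
      = pr μ X (h b) * Real.logb 2 (pr μ X (h b)) := by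
    intro b; rw [pr_comp_bij μ X g h hgh hhg]
  simp only [step]
  exact Fintype.sum_bijective h ⟨fun x y hxy => by rw [← hgh x, ← hgh y, hxy],
    fun a => ⟨g a, hhg a⟩⟩ _ _ (fun b => rfl)

lemma pr_pair_sum_right {A B : Type} [Fintype B] (μ : Ω → ℝ) (X : Ω → A) (Y : Ω → B) (a : A) :
    ∑ b, pr μ (fun ω => (X ω, Y ω)) (a, b) = pr μ X a := by
  unfold pr
  rw [Finset.sum_comm]
  refine Finset.sum_congr rfl fun ω _ => ?_
  simp only [Prod.mk.injEq]
  rw [Finset.sum_eq_single (Y ω)] <;> simp +contextual [Ne.symm]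

lemma pr_total {A : Type} [Fintype A] (μ : Ω → ℝ) (X : Ω → A) :
    ∑ a, pr μ X a = ∑ ω, μ ω := by
  unfold pr
  rw [Finset.sum_comm]
  refine Finset.sum_congr rfl fun ω _ => ?_
  rw [Finset.sum_eq_single (X ω)] <;> simp +contextual [Ne.symm]


/-! marginals of triples -/

lemma pr_triple_sum_mid {A B C : Type} [Fintype B] (μ : Ω → ℝ)
    (X : Ω → A) (Y : Ω → B) (Z : Ω → C) (a : A) (c : C) :
    ∑ b, pr μ (fun ω => (X ω, Y ω, Z ω)) (a, b, c) = pr μ (fun ω => (X ω, Z ω)) (a, c) := by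
  unfold pr
  rw [Finset.sum_comm]
  refine Finset.sum_congr rfl fun ω _ => ?_
  simp only [Prod.mk.injEq]
  rw [Finset.sum_eq_single (Y ω)] <;> simp +contextual [Ne.symm] <;> tauto

lemma pr_triple_sum_left {A B C : Type} [Fintype A] (μ : Ω → ℝ)
    (X : Ω → A) (Y : Ω → B) (Z : Ω → C) (b : B) (c : C) :
    ∑ a, pr μ (fun ω => (X ω, Y ω, Z ω)) (a, b, c) = pr μ (fun ω => (Y ω, Z ω)) (b, c) := by
  unfold pr
  rw [Finset.sum_comm]
  refine Finset.sum_congr rfl fun ω _ => ?_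
  simp only [Prod.mk.injEq]
  rw [Finset.sum_eq_single (X ω)] <;> simp +contextual [Ne.symm] <;> tauto

lemma pr_pair_sum_left {A B : Type} [Fintype A] (μ : Ω → ℝ) (X : Ω → A) (Y : Ω → B) (b : B) :
    ∑ a, pr μ (fun ω => (X ω, Y ω)) (a, b) = pr μ Y b := by
  unfold pr
  rw [Finset.sum_comm]
  refine Finset.sum_congr rfl fun ω _ => ?_
  simp only [Prod.mk.injEq]
  rw [Finset.sum_eq_single (X ω)] <;> simp +contextual [Ne.symm] <;> tauto

/-! conditional independence from a pointwise factorization of the joint pmf -/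

lemma condIndep_of_factor {A B C : Type} [Fintype A] [Fintype B] [Fintype C] (μ : Ω → ℝ)
    (X : Ω → A) (Y : Ω → B) (Z : Ω → C) (φ : A → C → ℝ) (ψ : B → C → ℝ)
    (hfac : ∀ a b c, pr μ (fun ω => (X ω, Y ω, Z ω)) (a, b, c) = φ a c * ψ b c) :
    CondIndep μ X Y Z := by
  intro a b c _
  have hxz : pr μ (fun ω => (X ω, Z ω)) (a, c) = φ a c * ∑ b', ψ b' c := by
    rw [← pr_triple_sum_mid μ X Y Z a c]
    simp only [Finset.mul_sum]
    exact Finset.sum_congr rfl fun b' _ => hfac a b' c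
  have hyz : pr μ (fun ω => (Y ω, Z ω)) (b, c) = (∑ a', φ a' c) * ψ b c := by
    rw [← pr_triple_sum_left μ X Y Z b c]
    simp only [Finset.sum_mul]
    exact Finset.sum_congr rfl fun a' _ => hfac a' b c
  have hz : pr μ Z c = (∑ a', φ a' c) * ∑ b', ψ b' c := by
    rw [← pr_pair_sum_left μ Y Z c]
    simp only [Finset.mul_sum]
    refine Finset.sum_congr rfl fun b' _ => ?_
    rw [← pr_triple_sum_left μ X Y Z b' c]
    simp only [Finset.sum_mul]
    exact Finset.sum_congr rfl fun a' _ => hfac a' b' c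
  rw [hfac, hxz, hyz, hz]; ring

/-! conditional independence gives the entropy identity H(X,Y,Z) + H(Z) = H(X,Z) + H(Y,Z) -/

lemma ent_condIndep {A B C : Type} [Fintype A] [Fintype B] [Fintype C] {μ : Ω → ℝ}
    (hμ : IsPMF μ) {X : Ω → A} {Y : Ω → B} {Z : Ω → C} (h : CondIndep μ X Y Z) :
    ent μ (fun ω => (X ω, Y ω, Z ω)) + ent μ Z
      = ent μ (fun ω => (X ω, Z ω)) + ent μ (fun ω => (Y ω, Z ω)) := by
  unfold ent
  set p3 : A → B → C → ℝ := fun a b c => pr μ (fun ω => (X ω, Y ω, Z ω)) (a, b, c) with hp3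
  have h3nn : ∀ a b c, 0 ≤ p3 a b c := fun a b c => pr_nonneg hμ.1 _ _
  -- rewrite all four entropy sums as triple sums weighted by p3
  have hXZ : ∑ x : A × C, pr μ (fun ω => (X ω, Z ω)) x * Real.logb 2 (pr μ (fun ω => (X ω, Z ω)) x)
      = ∑ a, ∑ b, ∑ c, p3 a b c * Real.logb 2 (pr μ (fun ω => (X ω, Z ω)) (a, c)) := by
    rw [Fintype.sum_prod_type]
    refine Finset.sum_congr rfl fun a _ => ?_
    rw [Finset.sum_comm]
    refine Finset.sum_congr rfl fun c _ => ?_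
    rw [← pr_triple_sum_mid μ X Y Z a c]
    simp only [Finset.sum_mul]
    rfl
  have hYZ : ∑ x : B × C, pr μ (fun ω => (Y ω, Z ω)) x * Real.logb 2 (pr μ (fun ω => (Y ω, Z ω)) x)
      = ∑ a, ∑ b, ∑ c, p3 a b c * Real.logb 2 (pr μ (fun ω => (Y ω, Z ω)) (b, c)) := by
    rw [Fintype.sum_prod_type]
    refine Eq.symm ?_
    calc ∑ a, ∑ b, ∑ c, p3 a b c * Real.logb 2 (pr μ (fun ω => (Y ω, Z ω)) (b, c))
        = ∑ b, ∑ a, ∑ c, p3 a b c * Real.logb 2 (pr μ (fun ω => (Y ω, Z ω)) (b, c)) := by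
          rw [Finset.sum_comm]
      _ = ∑ b, ∑ c, ∑ a, p3 a b c * Real.logb 2 (pr μ (fun ω => (Y ω, Z ω)) (b, c)) := by
          exact Finset.sum_congr rfl fun b _ => by rw [Finset.sum_comm]
      _ = ∑ b, ∑ c, pr μ (fun ω => (Y ω, Z ω)) (b, c)
            * Real.logb 2 (pr μ (fun ω => (Y ω, Z ω)) (b, c)) := by
          refine Finset.sum_congr rfl fun b _ => Finset.sum_congr rfl fun c _ => ?_
          rw [← pr_triple_sum_left μ X Y Z b c]
          simp only [Finset.sum_mul]
          rfl
  have hZ : ∑ c, pr μ Z c * Real.logb 2 (pr μ Z c)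
      = ∑ a, ∑ b, ∑ c, p3 a b c * Real.logb 2 (pr μ Z c) := by
    have h1 : ∀ c, pr μ Z c * Real.logb 2 (pr μ Z c)
        = ∑ a, ∑ b, p3 a b c * Real.logb 2 (pr μ Z c) := by
      intro c
      rw [← pr_pair_sum_left μ X Z c]
      simp only [Finset.sum_mul]
      refine Finset.sum_congr rfl fun a _ => ?_
      rw [← pr_triple_sum_mid μ X Y Z a c]
      simp only [Finset.sum_mul]
      rfl
    simp only [h1]
    rw [Finset.sum_comm]
    exact Finset.sum_congr rfl fun a _ => by rw [Finset.sum_comm]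
  have h3 : ∑ x : A × B × C,
        pr μ (fun ω => (X ω, Y ω, Z ω)) x * Real.logb 2 (pr μ (fun ω => (X ω, Y ω, Z ω)) x)
      = ∑ a, ∑ b, ∑ c, p3 a b c * Real.logb 2 (p3 a b c) := by
    rw [Fintype.sum_prod_type]
    exact Finset.sum_congr rfl fun a _ => by rw [Fintype.sum_prod_type]
  -- pointwise key identity
  have key : ∀ a b c, p3 a b c * Real.logb 2 (p3 a b c) + p3 a b c * Real.logb 2 (pr μ Z c)
      = p3 a b c * Real.logb 2 (pr μ (fun ω => (X ω, Z ω)) (a, c))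
        + p3 a b c * Real.logb 2 (pr μ (fun ω => (Y ω, Z ω)) (b, c)) := by
    intro a b c
    by_cases h0 : p3 a b c = 0
    · simp [h0]
    · have hzc : p3 a b c ≤ pr μ Z c := by
        calc p3 a b c ≤ pr μ (fun ω => (X ω, Z ω)) (a, c) := by
              rw [← pr_triple_sum_mid μ X Y Z a c]
              exact Finset.single_le_sum (fun b' _ => h3nn a b' c) (Finset.mem_univ b)
          _ ≤ pr μ Z c := by
              rw [← pr_pair_sum_left μ X Z c]
              exact Finset.single_le_sum
                (f := fun a' => pr μ (fun ω => (X ω, Z ω)) (a', c))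
                (fun a' _ => pr_nonneg hμ.1 _ _) (Finset.mem_univ a)
      have hzne : pr μ Z c ≠ 0 := fun hz => h0 (le_antisymm (hz ▸ hzc) (h3nn a b c))
      have hfac := h a b c hzne
      have hprodne : pr μ (fun ω => (X ω, Z ω)) (a, c) * pr μ (fun ω => (Y ω, Z ω)) (b, c) ≠ 0 := by
        rw [← hfac]; exact mul_ne_zero h0 hzne
      have hxne : pr μ (fun ω => (X ω, Z ω)) (a, c) ≠ 0 := left_ne_zero_of_mul hprodne
      have hyne : pr μ (fun ω => (Y ω, Z ω)) (b, c) ≠ 0 := right_ne_zero_of_mul hprodne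
      have hlog : Real.logb 2 (p3 a b c) + Real.logb 2 (pr μ Z c)
          = Real.logb 2 (pr μ (fun ω => (X ω, Z ω)) (a, c))
            + Real.logb 2 (pr μ (fun ω => (Y ω, Z ω)) (b, c)) := by
        rw [← Real.logb_mul h0 hzne, ← Real.logb_mul hxne hyne, hfac]
      rw [← mul_add, ← mul_add, hlog]
  rw [h3, hXZ, hYZ, hZ]
  have final : (∑ a, ∑ b, ∑ c, p3 a b c * Real.logb 2 (p3 a b c))
        + (∑ a, ∑ b, ∑ c, p3 a b c * Real.logb 2 (pr μ Z c))
      = (∑ a, ∑ b, ∑ c, p3 a b c * Real.logb 2 (pr μ (fun ω => (X ω, Z ω)) (a, c)))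
        + (∑ a, ∑ b, ∑ c, p3 a b c * Real.logb 2 (pr μ (fun ω => (Y ω, Z ω)) (b, c))) := by
    simp only [← Finset.sum_add_distrib]
    exact Finset.sum_congr rfl fun a _ => Finset.sum_congr rfl fun b _ =>
      Finset.sum_congr rfl fun c _ => key a b c
  linarith [final]


section Split
variable {n : ℕ} {V : Type} 

/-- split a vector at index `i` -/
def sp (i : Fin n) (w : Fin n → V) :
    ({j : Fin n // j < i} → V) × V × ({j : Fin n // i < j} → V) :=
  (fun j => w j.1, w i, fun j => w j.1)

/-- glue a vector from parts -/
def gl (i : Fin n) (x : ({j : Fin n // j < i} → V) × V × ({j : Fin n // i < j} → V)) :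
    Fin n → V :=
  fun j => if h : j < i then x.1 ⟨j, h⟩ else if h' : i < j then x.2.2 ⟨j, h'⟩ else x.2.1

lemma gl_sp (i : Fin n) (w : Fin n → V) : gl i (sp i w) = w := by
  funext j
  unfold gl sp
  split_ifs with h h'
  · rfl
  · rfl
  · have hji : j = i := le_antisymm (not_lt.1 h') (not_lt.1 h)
    rw [hji]

lemma sp_gl (i : Fin n) (x : ({j : Fin n // j < i} → V) × V × ({j : Fin n // i < j} → V)) : sp i (gl i x) = x := by
  obtain ⟨p, t, r⟩ := x
  unfold sp gl
  simp only [Prod.mk.injEq]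
  refine ⟨funext fun j => ?_, ?_, funext fun j => ?_⟩
  · rw [dif_pos j.2]
  · rw [dif_neg (lt_irrefl i), dif_neg (lt_irrefl i)]
  · rw [dif_neg (not_lt.2 (le_of_lt j.2)), dif_pos j.2]

/-- prefix extension -/
def pext (i : Fin n) (x : ({j : Fin n // j < i} → V) × V) : {j : Fin n // j.1 < i.1 + 1} → V :=
  fun j => if h : j.1 < i then x.1 ⟨j.1, h⟩ else x.2

def prest (i : Fin n) (w : {j : Fin n // j.1 < i.1 + 1} → V) : ({j : Fin n // j < i} → V) × V :=
  (fun j => w ⟨j.1, Nat.lt_succ_of_lt j.2⟩, w ⟨i, Nat.lt_succ_self _⟩)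

lemma prest_pext (i : Fin n) (x : ({j : Fin n // j < i} → V) × V) : prest i (pext i x) = x := by
  obtain ⟨u, a⟩ := x
  simp only [prest, pext, Prod.mk.injEq]
  refine ⟨funext fun j => ?_, ?_⟩
  · rw [dif_pos j.2]
  · rw [dif_neg (lt_irrefl i)]

lemma pext_prest (i : Fin n) (w : {j : Fin n // j.1 < i.1 + 1} → V) : pext i (prest i w) = w := by
  funext j
  simp only [pext, prest]
  split_ifs with h
  · rfl
  · have hji : (i : Fin n) = j.1 :=
      Fin.ext (Nat.le_antisymm (Nat.lt_succ_iff.1 j.2) (not_lt.1 h)).symm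
    exact congrArg w (Subtype.ext hji)

lemma pext_eval (i : Fin n) (w : Fin n → V) :
    pext i ((fun j : {j : Fin n // j < i} => w j.1), w i)
      = fun j : {j : Fin n // j.1 < i.1 + 1} => w j.1 := by
  funext j
  simp only [pext]
  split_ifs with h
  · rfl
  · have hji : (i : Fin n) = j.1 :=
      Fin.ext (Nat.le_antisymm (Nat.lt_succ_iff.1 j.2) (not_lt.1 h)).symm
    exact congrArg w hji

end Split

/-- three-way splitting of a product over `Fin n` -/
lemma prod3_split {n : ℕ} (i : Fin n) (F : Fin n → ℝ) :
    ∏ j, F j = (∏ j : {j : Fin n // j < i}, F j.1) * F i * ∏ j : {j : Fin n // i < j}, F j.1 := by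
  classical
  have h1 : ∏ j : {j : Fin n // j < i}, F j.1
      = ∏ j ∈ Finset.univ.filter (· < i), F j := by
    exact (Finset.prod_subtype (Finset.univ.filter (· < i)) (fun x => by simp) F).symm
  have h2 : ∏ j : {j : Fin n // i < j}, F j.1
      = ∏ j ∈ Finset.univ.filter (i < ·), F j := by
    exact (Finset.prod_subtype (Finset.univ.filter (i < ·)) (fun x => by simp) F).symm
  rw [h1, h2]
  rw [← Finset.prod_filter_mul_prod_filter_not Finset.univ (· < i) F]
  have hins : Finset.univ.filter (fun j => ¬ j < i) = insert i (Finset.univ.filter (i < ·)) := by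
    ext j
    simp only [Finset.mem_filter, Finset.mem_univ, true_and, Finset.mem_insert, not_lt]
    constructor
    · intro hij
      rcases eq_or_lt_of_le hij with h | h
      · exact Or.inl h.symm
      · exact Or.inr h
    · rintro (rfl | h)
      · exact le_refl _
      · exact le_of_lt h
  rw [hins, Finset.prod_insert (by simp [lt_irrefl])]
  ring

/-- product of indicators is indicator of the conjunction -/
lemma prod_ite_all {ι : Type} [Fintype ι] (P : ι → Prop) [DecidablePred P] (f : ι → ℝ) :
    ∏ j, (if P j then f j else 0) = if (∀ j, P j) then ∏ j, f j else 0 := by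
  by_cases h : ∀ j, P j
  · rw [if_pos h]
    exact Finset.prod_congr rfl fun j _ => if_pos (h j)
  · rw [if_neg h]
    push_neg at h
    obtain ⟨j0, hj0⟩ := h
    exact Finset.prod_eq_zero (Finset.mem_univ j0) (if_neg hj0)

/-- sum over functions of a product of per-coordinate factors -/
lemma sum_fn_prod {ι T : Type} [DecidableEq ι] [Fintype ι] [Fintype T] (f : ι → T → ℝ) :
    ∑ g : ι → T, ∏ j, f j (g j) = ∏ j, ∑ t, f j t :=
  (Fintype.prod_sum f).symm

lemma pair_fun_eq {ι S1 S2 : Type} (p : ι → S1 × S2) (y1 : ι → S1) (y2 : ι → S2) :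
    ((fun j => (p j).1) = y1 ∧ (fun j => (p j).2) = y2) ↔ p = fun j => (y1 j, y2 j) := by
  constructor
  · rintro ⟨h1, h2⟩
    funext j
    exact Prod.ext (congrFun h1 j) (congrFun h2 j)
  · rintro rfl
    exact ⟨rfl, rfl⟩

lemma ite_and_mul3 (Pa Pb Pc : Prop) [Decidable Pa] [Decidable Pb] [Decidable Pc] (a b c : ℝ) :
    (if Pa ∧ Pb ∧ Pc then a * b * c else 0)
      = (if Pa then a else 0) * (if Pb then b else 0) * (if Pc then c else 0) := by
  by_cases ha : Pa <;> by_cases hb : Pb <;> by_cases hc : Pc <;> simp [ha, hb, hc]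

lemma sum3_factor {α β γ : Type} [Fintype α] [Fintype β] [Fintype γ]
    (A : α → ℝ) (B : β → ℝ) (C : γ → ℝ) :
    ∑ x : α, ∑ y : β, ∑ z : γ, A x * B y * C z = (∑ x, A x) * (∑ y, B y) * (∑ z, C z) := by
  simp only [← Finset.sum_mul, ← Finset.mul_sum]



lemma ent_congr {A : Type} [Fintype A] (μ : Ω → ℝ) {F G : Ω → A} (h : ∀ ω, F ω = G ω) :
    ent μ F = ent μ G := by
  have : F = G := funext h
  rw [this]

lemma pr_congr {A : Type} (μ : Ω → ℝ) {F G : Ω → A} (h : ∀ ω, F ω = G ω) (a : A) :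
    pr μ F a = pr μ G a := by
  have : F = G := funext h
  rw [this]



/-- reconstruct the full `S1`-vector from prefix, middle value and suffix pairs -/
def gl1 {n : ℕ} {V W : Type} (i : Fin n) (y : {j : Fin n // j < i} → V) (a : V)
    (r : {j : Fin n // i < j} → V × W) : Fin n → V :=
  fun j => if h : j < i then y ⟨j, h⟩ else if h' : i < j then (r ⟨j, h'⟩).1 else a

lemma ent_reshape {A B : Type} [Fintype A] [Fintype B] (μ : Ω → ℝ) (F : Ω → A) (G : Ω → B)
    (g : A → B) (h : B → A) (hgh : ∀ b, g (h b) = b) (hhg : ∀ a, h (g a) = a)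
    (hF : ∀ ω, G ω = g (F ω)) : ent μ G = ent μ F := by
  rw [ent_congr μ hF]
  exact ent_comp_bij μ F g h hgh hhg

lemma sum4_factor_mid {α β γ δ : Type} [Fintype α] [Fintype β] [Fintype γ] [Fintype δ]
    (A : α → ℝ) (B : β → γ → ℝ) (C : δ → ℝ) :
    ∑ x, ∑ y, ∑ z, ∑ w, A x * B y z * C w
      = (∑ x, A x) * (∑ y, ∑ z, B y z) * (∑ w, C w) := by
  simp only [← Finset.mul_sum, ← Finset.sum_mul]
lemma sum5_factor {ε α β γ δ : Type} [Fintype ε] [Fintype α] [Fintype β] [Fintype γ] [Fintype δ]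
    (A : α → ℝ) (B : β → γ → ℝ) (C : ε → δ → ℝ) :
    ∑ m, ∑ x, ∑ y, ∑ z, ∑ w, A x * B y z * C m w
      = (∑ x, A x) * (∑ y, ∑ z, B y z) * (∑ m, ∑ w, C m w) := by
  simp only [← Finset.mul_sum, ← Finset.sum_mul]

/-- prefix entropies used in the chain rule, with the message -/
noncomputable def entA (μ : Ω → ℝ) {n : ℕ} {𝒮₁ 𝒮₂ ℳ₁₂ : Type}
    [Fintype 𝒮₁] [Fintype 𝒮₂] [Fintype ℳ₁₂]
    (S1 : Fin n → Ω → 𝒮₁) (S2 : Fin n → Ω → 𝒮₂) (M12 : Ω → ℳ₁₂) (k : ℕ) : ℝ :=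
  ent μ (fun ω => (M12 ω, (fun j : {j : Fin n // j.1 < k} => S1 j.1 ω), (fun j : Fin n => S2 j ω)))

/-- prefix entropies used in the chain rule, without the message -/
noncomputable def entB (μ : Ω → ℝ) {n : ℕ} {𝒮₁ 𝒮₂ : Type}
    [Fintype 𝒮₁] [Fintype 𝒮₂]
    (S1 : Fin n → Ω → 𝒮₁) (S2 : Fin n → Ω → 𝒮₂) (k : ℕ) : ℝ :=
  ent μ (fun ω => ((fun j : {j : Fin n // j.1 < k} => S1 j.1 ω), (fun j : Fin n => S2 j ω)))


/-- Converse step for Theorem 2, eq. (40): with `(S₁ᵢ,S₂ᵢ)` i.i.d., `M₁` independent of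
`(S₁ⁿ,S₂ⁿ)` and `M₁₂ = f₁₂(M₁,S₁ⁿ)`, one has
`I(M₁₂;S₁ⁿ|S₂ⁿ) = Σᵢ I(S₁ᵢ;Uᵢ|S₂ᵢ)` where `Uᵢ = (M₁₂, S₁ⁱ⁻¹, S₂ᵢ₊₁ⁿ)`. -/
theorem cmi_state_decomposition_two_way
    {Ω : Type} [Fintype Ω] (μ : Ω → ℝ) (hμ : IsPMF μ)
    {n : ℕ} {𝒮₁ 𝒮₂ ℳ₁ ℳ₁₂ : Type}
    [Fintype 𝒮₁] [Fintype 𝒮₂] [Fintype ℳ₁] [Fintype ℳ₁₂]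
    (S1 : Fin n → Ω → 𝒮₁) (S2 : Fin n → Ω → 𝒮₂) (M1 : Ω → ℳ₁)
    (q : 𝒮₁ × 𝒮₂ → ℝ) (hq : IsPMF q)
    (hiid : ∀ s : Fin n → 𝒮₁ × 𝒮₂,
      pr μ (fun ω => fun i => (S1 i ω, S2 i ω)) s = ∏ i, q (s i))
    (hindep : ∀ (m : ℳ₁) (s : Fin n → 𝒮₁ × 𝒮₂),
      pr μ (fun ω => (M1 ω, fun i => (S1 i ω, S2 i ω))) (m, s)
        = pr μ M1 m * pr μ (fun ω => fun i => (S1 i ω, S2 i ω)) s)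
    (f12 : ℳ₁ → (Fin n → 𝒮₁) → ℳ₁₂)
    (M12 : Ω → ℳ₁₂) (hM12 : ∀ ω, M12 ω = f12 (M1 ω) (fun i => S1 i ω)) :
    cmi μ M12 (fun ω => fun i => S1 i ω) (fun ω => fun i => S2 i ω)
      = ∑ i : Fin n, cmi μ (S1 i)
          (fun ω => (M12 ω, (fun j : {j : Fin n // j < i} => S1 j.1 ω),
            (fun j : {j : Fin n // i < j} => S2 j.1 ω)))
          (S2 i) := by
  classical
  have prodGl : ∀ (i : Fin n)
      (x : ({j : Fin n // j < i} → 𝒮₁ × 𝒮₂) × (𝒮₁ × 𝒮₂) × ({j : Fin n // i < j} → 𝒮₁ × 𝒮₂)),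
      (∏ j, q (gl i x j)) = (∏ j, q (x.1 j)) * q x.2.1 * (∏ j, q (x.2.2 j)) := by
    intro i x
    rw [prod3_split i (fun j => q (gl i x j))]
    obtain ⟨p, t, r⟩ := x
    congr 1
    · congr 1
      · refine Finset.prod_congr rfl fun j _ => ?_
        simp only [gl]
        rw [dif_pos j.2]
      · simp only [gl]
        rw [dif_neg (lt_irrefl i), dif_neg (lt_irrefl i)]
    · refine Finset.prod_congr rfl fun j _ => ?_
      simp only [gl]
      rw [dif_neg (not_lt.2 (le_of_lt j.2)), dif_pos j.2]
  have prV : ∀ (i : Fin n)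
      (x : ({j : Fin n // j < i} → 𝒮₁ × 𝒮₂) × (𝒮₁ × 𝒮₂) × ({j : Fin n // i < j} → 𝒮₁ × 𝒮₂)),
      pr μ (fun ω => sp i (fun j => (S1 j ω, S2 j ω))) x
        = (∏ j, q (x.1 j)) * q x.2.1 * (∏ j, q (x.2.2 j)) := by
    intro i x
    rw [pr_comp_bij μ (fun ω => fun j => (S1 j ω, S2 j ω)) (sp i) (gl i) (sp_gl i) (gl_sp i) x]
    rw [hiid (gl i x), prodGl i x]
  have condA : ∀ i : Fin n, CondIndep μ (S1 i)
      (fun ω => ((fun j : {j : Fin n // j < i} => S1 j.1 ω),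
        (fun j : {j : Fin n // j < i} => S2 j.1 ω),
        (fun j : {j : Fin n // i < j} => S2 j.1 ω)))
      (S2 i) := by
    intro i
    refine condIndep_of_factor μ _ _ _ (fun a c => q (a, c))
      (fun y _ => (∏ j : {j : Fin n // j < i}, q (y.1 j, y.2.1 j))
        * ∏ j : {j : Fin n // i < j}, ∑ t1, q (t1, y.2.2 j)) ?_
    rintro a ⟨y1, y2, y3⟩ c
    have hvar : ∀ ω, ((S1 i ω, ((fun j : {j : Fin n // j < i} => S1 j.1 ω),
        (fun j : {j : Fin n // j < i} => S2 j.1 ω),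
        (fun j : {j : Fin n // i < j} => S2 j.1 ω)), S2 i ω))
        = (fun x : ({j : Fin n // j < i} → 𝒮₁ × 𝒮₂) × (𝒮₁ × 𝒮₂) ×
            ({j : Fin n // i < j} → 𝒮₁ × 𝒮₂) =>
            (x.2.1.1, ((fun j => (x.1 j).1), (fun j => (x.1 j).2), (fun j => (x.2.2 j).2)),
              x.2.1.2)) (sp i (fun j => (S1 j ω, S2 j ω))) := fun ω => rfl
    rw [pr_congr μ hvar (a, (y1, y2, y3), c)]
    rw [pr_comp μ (fun ω => sp i (fun j => (S1 j ω, S2 j ω)))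
      (fun x : ({j : Fin n // j < i} → 𝒮₁ × 𝒮₂) × (𝒮₁ × 𝒮₂) ×
          ({j : Fin n // i < j} → 𝒮₁ × 𝒮₂) =>
        (x.2.1.1, ((fun j => (x.1 j).1), (fun j => (x.1 j).2), (fun j => (x.2.2 j).2)),
          x.2.1.2)) ((a, (y1, y2, y3), c))]
    simp only [Fintype.sum_prod_type]
    simp only [prV i]
    have hpoint : ∀ (p : {j : Fin n // j < i} → 𝒮₁ × 𝒮₂) (t1 : 𝒮₁) (t2 : 𝒮₂)
        (r : {j : Fin n // i < j} → 𝒮₁ × 𝒮₂),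
        (if ((t1, ((fun j => (p j).1), (fun j => (p j).2), (fun j => (r j).2)), t2)
            = (a, (y1, y2, y3), c)) then (∏ j, q (p j)) * q (t1, t2) * (∏ j, q (r j)) else 0)
        = (if p = (fun j => (y1 j, y2 j)) then (∏ j, q (p j)) else 0)
          * (if t1 = a ∧ t2 = c then q (t1, t2) else 0)
          * (if (fun j => (r j).2) = y3 then (∏ j, q (r j)) else 0) := by
      intro p t1 t2 r
      rw [← ite_and_mul3]
      refine if_congr ?_ rfl rfl
      have hp := pair_fun_eq p y1 y2
      simp only [Prod.mk.injEq]
      tauto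
    simp only [hpoint]
    rw [sum4_factor_mid]
    rw [Finset.sum_ite_eq' Finset.univ (fun j : {j : Fin n // j < i} => (y1 j, y2 j))
      (fun p => ∏ j, q (p j))]
    have hmid : (∑ t1 : 𝒮₁, ∑ t2 : 𝒮₂, if t1 = a ∧ t2 = c then q (t1, t2) else 0)
        = q (a, c) := by
      rw [Finset.sum_eq_single a]
      · rw [Finset.sum_eq_single c]
        · simp
        · intro t2 _ ht2; simp [ht2]
        · simp
      · intro t1 _ ht1; simp [ht1]
      · simp
    rw [hmid]
    have hr : (∑ r : {j : Fin n // i < j} → 𝒮₁ × 𝒮₂,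
        if (fun j => (r j).2) = y3 then (∏ j, q (r j)) else 0)
        = ∏ j : {j : Fin n // i < j}, ∑ t1, q (t1, y3 j) := by
      set F : {j : Fin n // i < j} → 𝒮₁ × 𝒮₂ → ℝ :=
        fun j t => if t.2 = y3 j then q t else 0 with hF
      have h1 : ∀ r : {j : Fin n // i < j} → 𝒮₁ × 𝒮₂,
          (if (fun j => (r j).2) = y3 then (∏ j, q (r j)) else 0)
          = ∏ j, F j (r j) := by
        intro r
        rw [hF, prod_ite_all]
        refine if_congr ?_ rfl rfl
        exact ⟨fun h j => congrFun h j, fun h => funext h⟩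
      simp only [h1]
      rw [sum_fn_prod F]
      refine Finset.prod_congr rfl fun j _ => ?_
      rw [hF]
      rw [Fintype.sum_prod_type]
      refine Finset.sum_congr rfl fun t1 _ => ?_
      rw [Finset.sum_eq_single (y3 j)]
      · simp
      · intro t2 _ ht2; simp [ht2]
      · simp
    rw [hr]
    simp only [Finset.mem_univ, if_true]
    ring
  have condB : ∀ i : Fin n, CondIndep μ (S1 i)
      (fun ω => (fun j : {j : Fin n // j < i} => S2 j.1 ω))
      (fun ω => (M12 ω, (fun j : {j : Fin n // j < i} => S1 j.1 ω), S2 i ω,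
        (fun j : {j : Fin n // i < j} => S2 j.1 ω))) := by
    intro i
    have prW : ∀ (m : ℳ₁) (x : ({j : Fin n // j < i} → 𝒮₁ × 𝒮₂) × (𝒮₁ × 𝒮₂) ×
        ({j : Fin n // i < j} → 𝒮₁ × 𝒮₂)),
        pr μ (fun ω => (M1 ω, sp i (fun j => (S1 j ω, S2 j ω)))) (m, x)
          = pr μ (fun ω => (M1 ω, fun j => (S1 j ω, S2 j ω))) (m, gl i x) := by
      intro m x
      unfold pr
      refine Finset.sum_congr rfl fun ω _ => ?_
      congr 1
      simp only [eq_iff_iff, Prod.mk.injEq]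
      constructor
      · rintro ⟨h1, h2⟩
        exact ⟨h1, by rw [← h2, gl_sp]⟩
      · rintro ⟨h1, h2⟩
        exact ⟨h1, by rw [h2, sp_gl]⟩
    have prMV : ∀ (m : ℳ₁) (x : ({j : Fin n // j < i} → 𝒮₁ × 𝒮₂) × (𝒮₁ × 𝒮₂) ×
        ({j : Fin n // i < j} → 𝒮₁ × 𝒮₂)),
        pr μ (fun ω => (M1 ω, sp i (fun j => (S1 j ω, S2 j ω)))) (m, x)
          = pr μ M1 m * ((∏ j, q (x.1 j)) * q x.2.1 * (∏ j, q (x.2.2 j))) := by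
      intro m x
      rw [prW m x, hindep m (gl i x), hiid (gl i x), prodGl i x]
    refine condIndep_of_factor μ _ _ _
      (fun a z => q (a, z.2.2.1) * ∑ m, ∑ r : {j : Fin n // i < j} → 𝒮₁ × 𝒮₂,
        if ((fun j => (r j).2) = z.2.2.2 ∧ f12 m (gl1 i z.2.1 a r) = z.1)
        then pr μ M1 m * ∏ j, q (r j) else 0)
      (fun y2 z => ∏ j : {j : Fin n // j < i}, q (z.2.1 j, y2 j)) ?_
    rintro a y2 ⟨m12, y1, c, y3⟩
    have hvar : ∀ ω, ((S1 i ω, (fun j : {j : Fin n // j < i} => S2 j.1 ω),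
        (M12 ω, (fun j : {j : Fin n // j < i} => S1 j.1 ω), S2 i ω,
          (fun j : {j : Fin n // i < j} => S2 j.1 ω))))
        = (fun x : ℳ₁ × (({j : Fin n // j < i} → 𝒮₁ × 𝒮₂) × (𝒮₁ × 𝒮₂) ×
            ({j : Fin n // i < j} → 𝒮₁ × 𝒮₂)) =>
            (x.2.2.1.1, (fun j => (x.2.1 j).2),
              (f12 x.1 (fun j => (gl i x.2 j).1), (fun j => (x.2.1 j).1), x.2.2.1.2,
                (fun j => (x.2.2.2 j).2))))
          ((M1 ω, sp i (fun j => (S1 j ω, S2 j ω)))) := by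
      intro ω
      have h2 : M12 ω
          = f12 (M1 ω) (fun j => (gl i (sp i (fun j' => (S1 j' ω, S2 j' ω))) j).1) := by
        rw [gl_sp]
        exact hM12 ω
      exact Prod.ext rfl (Prod.ext rfl (Prod.ext h2 (Prod.ext rfl (Prod.ext rfl rfl))))
    rw [pr_congr μ hvar (a, y2, (m12, y1, c, y3))]
    rw [pr_comp μ (fun ω => (M1 ω, sp i (fun j => (S1 j ω, S2 j ω))))
      (fun x : ℳ₁ × (({j : Fin n // j < i} → 𝒮₁ × 𝒮₂) × (𝒮₁ × 𝒮₂) ×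
          ({j : Fin n // i < j} → 𝒮₁ × 𝒮₂)) =>
        (x.2.2.1.1, (fun j => (x.2.1 j).2),
          (f12 x.1 (fun j => (gl i x.2 j).1), (fun j => (x.2.1 j).1), x.2.2.1.2,
            (fun j => (x.2.2.2 j).2)))) ((a, y2, (m12, y1, c, y3)))]
    simp only [Fintype.sum_prod_type]
    simp only [prMV]
    have hpoint : ∀ (m : ℳ₁) (p : {j : Fin n // j < i} → 𝒮₁ × 𝒮₂) (t1 : 𝒮₁) (t2 : 𝒮₂)
        (r : {j : Fin n // i < j} → 𝒮₁ × 𝒮₂),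
        (if ((t1, (fun j => (p j).2),
            (f12 m (fun j => (gl i (p, (t1, t2), r) j).1), (fun j => (p j).1), t2,
              (fun j => (r j).2))) = (a, y2, (m12, y1, c, y3)))
          then pr μ M1 m * ((∏ j, q (p j)) * q (t1, t2) * (∏ j, q (r j))) else 0)
        = (if p = (fun j => (y1 j, y2 j)) then (∏ j, q (p j)) else 0)
          * (if t1 = a ∧ t2 = c then q (t1, t2) else 0)
          * (if ((fun j => (r j).2) = y3 ∧ f12 m (gl1 i y1 a r) = m12)
              then pr μ M1 m * ∏ j, q (r j) else 0) := by
      intro m p t1 t2 r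
      rw [← ite_and_mul3]
      refine if_congr ?_ (by ring) rfl
      have hglr : ∀ (_ : p = fun j => (y1 j, y2 j)) (_ : t1 = a),
          (fun j => (gl i (p, (t1, t2), r) j).1) = gl1 i y1 a r := by
        intro hp h1
        funext j
        simp only [gl, gl1]
        split_ifs with hlt hgt
        · rw [congrFun hp ⟨j, hlt⟩]
        · rfl
        · exact h1
      have hpe := pair_fun_eq p y1 y2
      simp only [Prod.mk.injEq]
      constructor
      · rintro ⟨h1, h2, h3, h4, h5, h6⟩
        have hp : p = fun j => (y1 j, y2 j) := hpe.1 ⟨h4, h2⟩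
        exact ⟨hp, ⟨h1, h5⟩, h6, by rw [← hglr hp h1]; exact h3⟩
      · rintro ⟨hp, ⟨h1, h5⟩, h6, h3⟩
        have hc := hpe.2 hp
        exact ⟨h1, hc.2, by rw [hglr hp h1]; exact h3, hc.1, h5, h6⟩
    simp only [hpoint]
    rw [sum5_factor]
    rw [Finset.sum_ite_eq' Finset.univ (fun j : {j : Fin n // j < i} => (y1 j, y2 j))
      (fun p => ∏ j, q (p j))]
    have hmid : (∑ t1 : 𝒮₁, ∑ t2 : 𝒮₂, if t1 = a ∧ t2 = c then q (t1, t2) else 0)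
        = q (a, c) := by
      rw [Finset.sum_eq_single a]
      · rw [Finset.sum_eq_single c]
        · simp
        · intro t2 _ ht2; simp [ht2]
        · simp
      · intro t1 _ ht1; simp [ht1]
      · simp
    rw [hmid]
    simp only [Finset.mem_univ, if_true]
    ring
  -- boundary identifications
  have hA0 : entA μ S1 S2 M12 0 = ent μ (fun ω => (M12 ω, (fun i => S2 i ω))) := by
    refine ent_reshape μ _ _ (fun z => (z.1, (fun j : {j : Fin n // j.1 < 0} =>
      (absurd j.2 (Nat.not_lt_zero _) : 𝒮₁)), z.2)) (fun x => (x.1, x.2.2)) ?_ ?_ ?_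
    · intro x
      refine Prod.ext rfl (Prod.ext ?_ rfl)
      exact funext fun j => absurd j.2 (Nat.not_lt_zero _)
    · intro z; rfl
    · intro ω
      refine Prod.ext rfl (Prod.ext ?_ rfl)
      exact funext fun j => absurd j.2 (Nat.not_lt_zero _)
  have hAn : entA μ S1 S2 M12 n
      = ent μ (fun ω => (M12 ω, (fun i => S1 i ω), (fun i => S2 i ω))) := by
    refine ent_reshape μ _ _
      (fun z => (z.1, (fun j : {j : Fin n // j.1 < n} => z.2.1 j.1), z.2.2))
      (fun x => (x.1, (fun j : Fin n => x.2.1 ⟨j, j.isLt⟩), x.2.2)) ?_ ?_ ?_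
    · intro x; refine Prod.ext rfl (Prod.ext ?_ rfl); funext j; rfl
    · intro z; refine Prod.ext rfl (Prod.ext ?_ rfl); funext j; rfl
    · intro ω; rfl
  have hB0 : entB μ S1 S2 0 = ent μ (fun ω => (fun i => S2 i ω)) := by
    refine ent_reshape μ _ _ (fun z => ((fun j : {j : Fin n // j.1 < 0} =>
      (absurd j.2 (Nat.not_lt_zero _) : 𝒮₁)), z)) (fun x => x.2) ?_ ?_ ?_
    · intro x
      refine Prod.ext ?_ rfl
      exact funext fun j => absurd j.2 (Nat.not_lt_zero _)
    · intro z; rfl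
    · intro ω
      refine Prod.ext ?_ rfl
      exact funext fun j => absurd j.2 (Nat.not_lt_zero _)
  have hBn : entB μ S1 S2 n
      = ent μ (fun ω => ((fun i => S1 i ω), (fun i => S2 i ω))) := by
    refine ent_reshape μ _ _
      (fun z => ((fun j : {j : Fin n // j.1 < n} => z.1 j.1), z.2))
      (fun x => ((fun j : Fin n => x.1 ⟨j, j.isLt⟩), x.2)) ?_ ?_ ?_
    · intro x; refine Prod.ext ?_ rfl; funext j; rfl
    · intro z; refine Prod.ext ?_ rfl; funext j; rfl
    · intro ω; rfl
  -- per-index step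
  have key : ∀ i : Fin n,
      (entA μ S1 S2 M12 i.1 - entA μ S1 S2 M12 (i.1+1))
        + (entB μ S1 S2 (i.1+1) - entB μ S1 S2 i.1)
      = cmi μ (S1 i)
          (fun ω => (M12 ω, (fun j : {j : Fin n // j < i} => S1 j.1 ω),
            (fun j : {j : Fin n // i < j} => S2 j.1 ω)))
          (S2 i) := by
    intro i
    have hF1 := ent_condIndep hμ (condA i)
    have hF2 := ent_condIndep hμ (condB i)
    -- reshape the entropies appearing in hF1
    have eB1 : entB μ S1 S2 (i.1+1)
        = ent μ (fun ω => (S1 i ω, ((fun j : {j : Fin n // j < i} => S1 j.1 ω),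
            (fun j : {j : Fin n // j < i} => S2 j.1 ω),
            (fun j : {j : Fin n // i < j} => S2 j.1 ω)), S2 i ω)) := by
      refine ent_reshape μ _ _
        (fun x => (pext i (x.2.1.1, x.1), gl i (x.2.1.2.1, x.2.2, x.2.1.2.2)))
        (fun z => ((prest i z.1).2, ((prest i z.1).1, (sp i z.2).1, (sp i z.2).2.2),
          (sp i z.2).2.1)) ?_ ?_ ?_
      · intro z
        show (pext i (prest i z.1), gl i (sp i z.2)) = z
        rw [pext_prest, gl_sp]
      · rintro ⟨a, ⟨y1, y2, y3⟩, c⟩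
        show ((prest i (pext i (y1, a))).2, ((prest i (pext i (y1, a))).1,
          (sp i (gl i (y2, c, y3))).1, (sp i (gl i (y2, c, y3))).2.2),
          (sp i (gl i (y2, c, y3))).2.1) = _
        rw [prest_pext, sp_gl]
      · intro ω
        exact Prod.ext (pext_eval i (fun j => S1 j ω)).symm (gl_sp i (fun j => S2 j ω)).symm
    have eB0 : entB μ S1 S2 i.1
        = ent μ (fun ω => (((fun j : {j : Fin n // j < i} => S1 j.1 ω),
            (fun j : {j : Fin n // j < i} => S2 j.1 ω),
            (fun j : {j : Fin n // i < j} => S2 j.1 ω)), S2 i ω)) := by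
      refine ent_reshape μ _ _
        (fun x => (x.1.1, gl i (x.1.2.1, x.2, x.1.2.2)))
        (fun z => ((z.1, (sp i z.2).1, (sp i z.2).2.2), (sp i z.2).2.1)) ?_ ?_ ?_
      · intro z
        show (z.1, gl i (sp i z.2)) = z
        rw [gl_sp]
      · rintro ⟨⟨y1, y2, y3⟩, c⟩
        show ((y1, (sp i (gl i (y2, c, y3))).1, (sp i (gl i (y2, c, y3))).2.2),
          (sp i (gl i (y2, c, y3))).2.1) = _
        rw [sp_gl]
      · intro ω
        exact Prod.ext rfl (gl_sp i (fun j => S2 j ω)).symm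
    -- reshape the entropies appearing in hF2
    have eA1 : entA μ S1 S2 M12 (i.1+1)
        = ent μ (fun ω => (S1 i ω, (fun j : {j : Fin n // j < i} => S2 j.1 ω),
            (M12 ω, (fun j : {j : Fin n // j < i} => S1 j.1 ω), S2 i ω,
              (fun j : {j : Fin n // i < j} => S2 j.1 ω)))) := by
      refine ent_reshape μ _ _
        (fun x => (x.2.2.1, pext i (x.2.2.2.1, x.1),
          gl i (x.2.1, x.2.2.2.2.1, x.2.2.2.2.2)))
        (fun z => ((prest i z.2.1).2, (sp i z.2.2).1,
          (z.1, (prest i z.2.1).1, (sp i z.2.2).2.1, (sp i z.2.2).2.2))) ?_ ?_ ?_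
      · intro z
        show (z.1, pext i (prest i z.2.1), gl i (sp i z.2.2)) = z
        rw [pext_prest, gl_sp]
      · rintro ⟨a, y2, ⟨m12, y1, c, y3⟩⟩
        show ((prest i (pext i (y1, a))).2, (sp i (gl i (y2, c, y3))).1,
          (m12, (prest i (pext i (y1, a))).1, (sp i (gl i (y2, c, y3))).2.1,
            (sp i (gl i (y2, c, y3))).2.2)) = _
        rw [prest_pext, sp_gl]
      · intro ω
        exact Prod.ext rfl (Prod.ext (pext_eval i (fun j => S1 j ω)).symm
          (gl_sp i (fun j => S2 j ω)).symm)
    have eA0 : entA μ S1 S2 M12 i.1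
        = ent μ (fun ω => ((fun j : {j : Fin n // j < i} => S2 j.1 ω),
            (M12 ω, (fun j : {j : Fin n // j < i} => S1 j.1 ω), S2 i ω,
              (fun j : {j : Fin n // i < j} => S2 j.1 ω)))) := by
      refine ent_reshape μ _ _
        (fun x => (x.2.1, x.2.2.1, gl i (x.1, x.2.2.2.1, x.2.2.2.2)))
        (fun z => ((sp i z.2.2).1, (z.1, z.2.1, (sp i z.2.2).2.1, (sp i z.2.2).2.2))) ?_ ?_ ?_
      · intro z
        show (z.1, z.2.1, gl i (sp i z.2.2)) = z
        rw [gl_sp]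
      · rintro ⟨y2, ⟨m12, y1, c, y3⟩⟩
        show ((sp i (gl i (y2, c, y3))).1, (m12, y1, (sp i (gl i (y2, c, y3))).2.1,
          (sp i (gl i (y2, c, y3))).2.2)) = _
        rw [sp_gl]
      · intro ω
        exact Prod.ext rfl (Prod.ext rfl (gl_sp i (fun j => S2 j ω)).symm)
    have eZ : ent μ (fun ω => (M12 ω, (fun j : {j : Fin n // j < i} => S1 j.1 ω), S2 i ω,
          (fun j : {j : Fin n // i < j} => S2 j.1 ω)))
        = ent μ (fun ω => ((M12 ω, (fun j : {j : Fin n // j < i} => S1 j.1 ω),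
            (fun j : {j : Fin n // i < j} => S2 j.1 ω)), S2 i ω)) := by
      refine ent_reshape μ _ _
        (fun z => (z.1.1, z.1.2.1, z.2, z.1.2.2))
        (fun x => ((x.1, x.2.1, x.2.2.2), x.2.2.1)) ?_ ?_ ?_
      · intro x; rfl
      · intro z; rfl
      · intro ω; rfl
    have eXZ : ent μ (fun ω => (S1 i ω,
          (M12 ω, (fun j : {j : Fin n // j < i} => S1 j.1 ω), S2 i ω,
            (fun j : {j : Fin n // i < j} => S2 j.1 ω))))
        = ent μ (fun ω => (S1 i ω, (M12 ω, (fun j : {j : Fin n // j < i} => S1 j.1 ω),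
            (fun j : {j : Fin n // i < j} => S2 j.1 ω)), S2 i ω)) := by
      refine ent_reshape μ _ _
        (fun z => (z.1, (z.2.1.1, z.2.1.2.1, z.2.2, z.2.1.2.2)))
        (fun x => (x.1, (x.2.1, x.2.2.1, x.2.2.2.2), x.2.2.2.1)) ?_ ?_ ?_
      · intro x; rfl
      · intro z; rfl
      · intro ω; rfl
    rw [← eB1, ← eB0] at hF1
    rw [← eA1] at hF2
    rw [eZ, eXZ] at hF2
    rw [← eA0] at hF2
    unfold cmi
    linarith [hF1, hF2]
  -- telescoping
  have tele : cmi μ M12 (fun ω => fun i => S1 i ω) (fun ω => fun i => S2 i ω)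
      = ∑ k ∈ Finset.range n, ((entA μ S1 S2 M12 k - entA μ S1 S2 M12 (k+1))
          + (entB μ S1 S2 (k+1) - entB μ S1 S2 k)) := by
    rw [Finset.sum_add_distrib, Finset.sum_range_sub' (f := fun k => entA μ S1 S2 M12 k),
      Finset.sum_range_sub (f := fun k => entB μ S1 S2 k)]
    unfold cmi
    rw [hA0, hAn, hBn, hB0]
    ring
  rw [tele, ← Fin.sum_univ_eq_sum_range (fun k => (entA μ S1 S2 M12 k - entA μ S1 S2 M12 (k+1))
      + (entB μ S1 S2 (k+1) - entB μ S1 S2 k)) n]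
  exact Finset.sum_congr rfl fun i _ => key i


end Paper
end

section
/- Let the pairs (S_{1,i},S_{2,i}), i = 1,…,n, be i.i.d. finite-valued, let M1 be a finite-valued random variable independent of (S1^n,S2^n), and let M12 = f12(M1,S1^n) for a deterministic function f12. Then for every i ∈ {1,…,n}, S_{2,i} is conditionally independent of (M12, S1^{i−1}, S2_{i+1}^n) given S_{1,i}; that is, the Markov chain (M12, S1^{i−1}, S2_{i+1}^n) − S_{1,i} − S_{2,i} holds. -/
open scoped BigOperators Classical
open Finset

namespace Paper

variable {Ω : Type} [Fintype Ω]

/-- auxiliary: the function computing `(M12, S1^{i-1}, S2_{i+1}^n)` from `(m, s)`. -/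
def Ufun {n : ℕ} {𝒮₁ 𝒮₂ ℳ₁ ℳ₁₂ : Type} (f12 : ℳ₁ → (Fin n → 𝒮₁) → ℳ₁₂) (i : Fin n)
    (m : ℳ₁) (s : Fin n → 𝒮₁ × 𝒮₂) :
    ℳ₁₂ × ({j : Fin n // j < i} → 𝒮₁) × ({j : Fin n // i < j} → 𝒮₂) :=
  (f12 m (fun j => (s j).1), fun j => (s j.1).1, fun j => (s j.1).2)

/-- Markov chain (44) in the converse of Theorem 2: with `(S₁ᵢ,S₂ᵢ)` i.i.d., `M₁`
independent of the states and `M₁₂ = f₁₂(M₁,S₁ⁿ)`, for every `i` the chain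
`(M₁₂, S₁ⁱ⁻¹, S₂ᵢ₊₁ⁿ) − S₁ᵢ − S₂ᵢ` holds. -/
theorem markov_chain_U_S1_S2
    {Ω : Type} [Fintype Ω] (μ : Ω → ℝ) (hμ : IsPMF μ)
    {n : ℕ} {𝒮₁ 𝒮₂ ℳ₁ ℳ₁₂ : Type}
    [Fintype 𝒮₁] [Fintype 𝒮₂] [Fintype ℳ₁] [Fintype ℳ₁₂]
    (S1 : Fin n → Ω → 𝒮₁) (S2 : Fin n → Ω → 𝒮₂) (M1 : Ω → ℳ₁)
    (q : 𝒮₁ × 𝒮₂ → ℝ) (hq : IsPMF q)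
    (hiid : ∀ s : Fin n → 𝒮₁ × 𝒮₂,
      pr μ (fun ω => fun i => (S1 i ω, S2 i ω)) s = ∏ i, q (s i))
    (hindep : ∀ (m : ℳ₁) (s : Fin n → 𝒮₁ × 𝒮₂),
      pr μ (fun ω => (M1 ω, fun i => (S1 i ω, S2 i ω))) (m, s)
        = pr μ M1 m * pr μ (fun ω => fun i => (S1 i ω, S2 i ω)) s)
    (f12 : ℳ₁ → (Fin n → 𝒮₁) → ℳ₁₂)
    (M12 : Ω → ℳ₁₂) (hM12 : ∀ ω, M12 ω = f12 (M1 ω) (fun i => S1 i ω)) :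
    ∀ i : Fin n,
      CondIndep μ (S2 i)
        (fun ω => (M12 ω, (fun j : {j : Fin n // j < i} => S1 j.1 ω),
          (fun j : {j : Fin n // i < j} => S2 j.1 ω)))
        (S1 i) := by
  classical
  intro i a b c _hc
  -- the joint law of (M1, (S1,S2)^n)
  have key : ∀ {B' : Type} (g : ℳ₁ × (Fin n → 𝒮₁ × 𝒮₂) → B') (v : B'),
      pr μ (fun ω => g (M1 ω, fun j => (S1 j ω, S2 j ω))) v
        = ∑ p : ℳ₁ × (Fin n → 𝒮₁ × 𝒮₂),
            if g p = v then pr μ M1 p.1 * ∏ j, q (p.2 j) else 0 := by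
    intro B' g v
    rw [pr_comp μ (fun ω => (M1 ω, fun j => (S1 j ω, S2 j ω))) g v]
    refine Finset.sum_congr rfl fun p _ => ?_
    have hw : pr μ (fun ω => (M1 ω, fun j => (S1 j ω, S2 j ω))) p
        = pr μ M1 p.1 * ∏ j, q (p.2 j) := by
      obtain ⟨m, s⟩ := p
      rw [hindep, hiid]
    rw [hw]
  -- splitting facts
  have hEi : ∀ (t : 𝒮₁ × 𝒮₂) (r : {j : Fin n // j ≠ i} → 𝒮₁ × 𝒮₂),
      (Equiv.funSplitAt i (𝒮₁ × 𝒮₂)).symm (t, r) i = t := by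
    intro t r; simp
  have hEj : ∀ (t : 𝒮₁ × 𝒮₂) (r : {j : Fin n // j ≠ i} → 𝒮₁ × 𝒮₂) (j : Fin n) (h : j ≠ i),
      (Equiv.funSplitAt i (𝒮₁ × 𝒮₂)).symm (t, r) j = r ⟨j, h⟩ := by
    intro t r j h; simp [h]
  have hprod : ∀ (t : 𝒮₁ × 𝒮₂) (r : {j : Fin n // j ≠ i} → 𝒮₁ × 𝒮₂),
      ∏ j, q ((Equiv.funSplitAt i (𝒮₁ × 𝒮₂)).symm (t, r) j)
        = q t * ∏ j : {j : Fin n // j ≠ i}, q (r j) := by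
    intro t r
    rw [← Finset.mul_prod_erase Finset.univ _ (Finset.mem_univ i)]
    congr 1
    · rw [hEi]
    · rw [Finset.prod_subtype (p := fun j => j ≠ i) (Finset.univ.erase i) (fun x => by simp)
        (fun x => q ((Equiv.funSplitAt i (𝒮₁ × 𝒮₂)).symm (t, r) x))]
      exact Finset.prod_congr rfl fun x _ => by rw [hEj t r x.1 x.2]
  -- master evaluation lemma
  have master : ∀ {B' : Type} (g : ℳ₁ × (Fin n → 𝒮₁ × 𝒮₂) → B') (v : B')
      (gt : 𝒮₁ × 𝒮₂ → ℝ) (fm : ℳ₁ → ({j : Fin n // j ≠ i} → 𝒮₁ × 𝒮₂) → ℝ),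
      (∀ (m : ℳ₁) (t : 𝒮₁ × 𝒮₂) (r : {j : Fin n // j ≠ i} → 𝒮₁ × 𝒮₂),
        (if g (m, (Equiv.funSplitAt i (𝒮₁ × 𝒮₂)).symm (t, r)) = v
          then pr μ M1 m * ∏ j, q ((Equiv.funSplitAt i (𝒮₁ × 𝒮₂)).symm (t, r) j) else 0)
          = gt t * fm m r) →
      pr μ (fun ω => g (M1 ω, fun j => (S1 j ω, S2 j ω))) v
        = (∑ t, gt t) * (∑ m, ∑ r, fm m r) := by
    intro B' g v gt fm hpt
    rw [key g v, Fintype.sum_prod_type]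
    have hs : ∀ m, (∑ s : Fin n → 𝒮₁ × 𝒮₂,
        if g (m, s) = v then pr μ M1 m * ∏ j, q (s j) else 0)
        = ∑ t, ∑ r, gt t * fm m r := by
      intro m
      rw [← Equiv.sum_comp (Equiv.funSplitAt i (𝒮₁ × 𝒮₂)).symm
          (fun s => if g (m, s) = v then pr μ M1 m * ∏ j, q (s j) else 0),
        Fintype.sum_prod_type]
      exact Finset.sum_congr rfl fun t _ => Finset.sum_congr rfl fun r _ => hpt m t r
    rw [Finset.sum_congr rfl fun m _ => hs m]
    rw [Finset.mul_sum]
    refine Finset.sum_congr rfl fun m _ => ?_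
    rw [Finset.sum_mul_sum]
  -- independence of U from the i-th second coordinate
  have hUind : ∀ (m : ℳ₁) (t : 𝒮₁ × 𝒮₂) (r : {j : Fin n // j ≠ i} → 𝒮₁ × 𝒮₂), t.1 = c →
      Ufun f12 i m ((Equiv.funSplitAt i (𝒮₁ × 𝒮₂)).symm (t, r))
        = Ufun f12 i m ((Equiv.funSplitAt i (𝒮₁ × 𝒮₂)).symm ((c, a), r)) := by
    intro m t r h1
    unfold Ufun
    simp only [Prod.mk.injEq]
    refine ⟨?_, ?_, ?_⟩
    · congr 1
      funext j
      by_cases hj : j = i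
      · subst hj; rw [hEi, hEi, h1]
      · rw [hEj t r j hj, hEj (c, a) r j hj]
    · funext j
      rw [hEj t r j.1 (ne_of_lt j.2), hEj (c, a) r j.1 (ne_of_lt j.2)]
    · funext j
      rw [hEj t r j.1 (ne_of_gt j.2), hEj (c, a) r j.1 (ne_of_gt j.2)]
  -- the four evaluations
  have hP2 : pr μ (fun ω => (fun p : ℳ₁ × (Fin n → 𝒮₁ × 𝒮₂) => (p.2 i).1)
        (M1 ω, fun j => (S1 j ω, S2 j ω))) c
      = (∑ t : 𝒮₁ × 𝒮₂, if t.1 = c then q t else 0)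
        * (∑ m, ∑ r : {j : Fin n // j ≠ i} → 𝒮₁ × 𝒮₂,
            pr μ M1 m * ∏ j : {j : Fin n // j ≠ i}, q (r j)) := by
    refine master (fun p => (p.2 i).1) c (fun t => if t.1 = c then q t else 0)
      (fun m r => pr μ M1 m * ∏ j : {j : Fin n // j ≠ i}, q (r j)) fun m t r => ?_
    dsimp only
    rw [hprod t r]; simp only [hEi t r]
    by_cases h1 : t.1 = c <;> simp [h1] <;> ring
  have hP3 : pr μ (fun ω => (fun p : ℳ₁ × (Fin n → 𝒮₁ × 𝒮₂) => ((p.2 i).2, (p.2 i).1))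
        (M1 ω, fun j => (S1 j ω, S2 j ω))) (a, c)
      = (∑ t : 𝒮₁ × 𝒮₂, if t = (c, a) then q t else 0)
        * (∑ m, ∑ r : {j : Fin n // j ≠ i} → 𝒮₁ × 𝒮₂,
            pr μ M1 m * ∏ j : {j : Fin n // j ≠ i}, q (r j)) := by
    refine master (fun p => ((p.2 i).2, (p.2 i).1)) (a, c) (fun t => if t = (c, a) then q t else 0)
      (fun m r => pr μ M1 m * ∏ j : {j : Fin n // j ≠ i}, q (r j)) fun m t r => ?_
    dsimp only
    rw [hprod t r]; simp only [hEi t r]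
    by_cases h1 : t = (c, a)
    · subst h1; simp; ring
    · have h2 : ¬((t.2, t.1) = (a, c)) := by
        intro h; exact h1 (Prod.ext_iff.2 ⟨congrArg Prod.snd h, congrArg Prod.fst h⟩)
      simp [h1, h2]
  have hP4 : pr μ (fun ω => (fun p : ℳ₁ × (Fin n → 𝒮₁ × 𝒮₂) =>
        (Ufun f12 i p.1 p.2, (p.2 i).1)) (M1 ω, fun j => (S1 j ω, S2 j ω))) (b, c)
      = (∑ t : 𝒮₁ × 𝒮₂, if t.1 = c then q t else 0)
        * (∑ m, ∑ r : {j : Fin n // j ≠ i} → 𝒮₁ × 𝒮₂,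
            if Ufun f12 i m ((Equiv.funSplitAt i (𝒮₁ × 𝒮₂)).symm ((c, a), r)) = b
            then pr μ M1 m * ∏ j : {j : Fin n // j ≠ i}, q (r j) else 0) := by
    refine master (fun p => (Ufun f12 i p.1 p.2, (p.2 i).1)) (b, c)
      (fun t => if t.1 = c then q t else 0)
      (fun m r => if Ufun f12 i m ((Equiv.funSplitAt i (𝒮₁ × 𝒮₂)).symm ((c, a), r)) = b
        then pr μ M1 m * ∏ j : {j : Fin n // j ≠ i}, q (r j) else 0) fun m t r => ?_
    dsimp only
    rw [hprod t r]; simp only [hEi t r]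
    by_cases h1 : t.1 = c
    · rw [hUind m t r h1]
      by_cases h2 : Ufun f12 i m ((Equiv.funSplitAt i (𝒮₁ × 𝒮₂)).symm ((c, a), r)) = b
      · simp [Prod.ext_iff, h1, h2]; ring
      · simp [Prod.ext_iff, h2]
    · simp [Prod.ext_iff, h1]
  have hP1 : pr μ (fun ω => (fun p : ℳ₁ × (Fin n → 𝒮₁ × 𝒮₂) =>
        ((p.2 i).2, Ufun f12 i p.1 p.2, (p.2 i).1)) (M1 ω, fun j => (S1 j ω, S2 j ω))) (a, b, c)
      = (∑ t : 𝒮₁ × 𝒮₂, if t = (c, a) then q t else 0)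
        * (∑ m, ∑ r : {j : Fin n // j ≠ i} → 𝒮₁ × 𝒮₂,
            if Ufun f12 i m ((Equiv.funSplitAt i (𝒮₁ × 𝒮₂)).symm ((c, a), r)) = b
            then pr μ M1 m * ∏ j : {j : Fin n // j ≠ i}, q (r j) else 0) := by
    refine master (fun p => ((p.2 i).2, Ufun f12 i p.1 p.2, (p.2 i).1)) (a, b, c)
      (fun t => if t = (c, a) then q t else 0)
      (fun m r => if Ufun f12 i m ((Equiv.funSplitAt i (𝒮₁ × 𝒮₂)).symm ((c, a), r)) = b
        then pr μ M1 m * ∏ j : {j : Fin n // j ≠ i}, q (r j) else 0) fun m t r => ?_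
    dsimp only
    rw [hprod t r]; simp only [hEi t r]
    by_cases h1 : t = (c, a)
    · subst h1
      by_cases h2 : Ufun f12 i m ((Equiv.funSplitAt i (𝒮₁ × 𝒮₂)).symm ((c, a), r)) = b
      · simp [h2]; ring
      · simp [h2]
    · have h2 : ¬((t.2, Ufun f12 i m ((Equiv.funSplitAt i (𝒮₁ × 𝒮₂)).symm (t, r)), t.1)
          = (a, b, c)) := by
        intro h
        simp only [Prod.mk.injEq] at h
        exact h1 (Prod.ext_iff.2 ⟨h.2.2, h.1⟩)
      simp [h1, h2]
  -- assemble
  simp only [hM12]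
  show pr μ (fun ω => (fun p : ℳ₁ × (Fin n → 𝒮₁ × 𝒮₂) =>
        ((p.2 i).2, Ufun f12 i p.1 p.2, (p.2 i).1)) (M1 ω, fun j => (S1 j ω, S2 j ω))) (a, b, c)
      * pr μ (fun ω => (fun p : ℳ₁ × (Fin n → 𝒮₁ × 𝒮₂) => (p.2 i).1)
        (M1 ω, fun j => (S1 j ω, S2 j ω))) c
    = pr μ (fun ω => (fun p : ℳ₁ × (Fin n → 𝒮₁ × 𝒮₂) => ((p.2 i).2, (p.2 i).1))
        (M1 ω, fun j => (S1 j ω, S2 j ω))) (a, c)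
      * pr μ (fun ω => (fun p : ℳ₁ × (Fin n → 𝒮₁ × 𝒮₂) =>
        (Ufun f12 i p.1 p.2, (p.2 i).1)) (M1 ω, fun j => (S1 j ω, S2 j ω))) (b, c)
  rw [hP1, hP2, hP3, hP4]
  ring


end Paper
end
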